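/- Let k ≥ 1 and n ≥ 1 be integers and let L be a k×k integer matrix all of whose column sums are zero. Let M = nIₖ + L, and for each index i let M⁽ⁱ⁾ denote the matrix obtained from M by replacing its i-th row with the all-ones row vector. Then for every i, det(M) = n · det(M⁽ⁱ⁾). -/

import Mathlib

/-- If the column sums of `L` vanish and `M = nIₖ + L`, then for every row
index `i`, `det M = n · det M⁽ⁱ⁾`, where `M⁽ⁱ⁾` replaces the `i`-th row of `M` by the
all-ones row. -/
theorem det_eq_n_mul_det_updateRow_one
    (k n : ℕ) (hk : 1 ≤ k) (hn : 1 ≤ n)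
    (L : Matrix (Fin k) (Fin k) ℤ)
    (hcol : ∀ j, ∑ i, L i j = 0)
    (i : Fin k) :
    ((n : ℤ) • 1 + L).det
      = (n : ℤ) * (((n : ℤ) • 1 + L).updateRow i fun _ => 1).det := by
  set M : Matrix (Fin k) (Fin k) ℤ := (n : ℤ) • 1 + L with hM
  have hsum : (∑ r, M r) = (n : ℤ) • (fun _ => (1 : ℤ)) := by
    funext j
    simp only [Finset.sum_apply, hM, Matrix.add_apply, Matrix.smul_apply, Matrix.one_apply,
      Pi.smul_apply, smul_eq_mul, mul_one]
    erw [Finset.sum_apply]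
    simp only [Matrix.add_apply, Matrix.smul_apply, Matrix.one_apply, smul_eq_mul, mul_one]
    rw [Finset.sum_add_distrib, hcol, add_zero]
    simp [Finset.sum_ite_eq, Finset.mem_univ]
  have h1 : (M.updateRow i (∑ r, (1 : ℤ) • M r)).det = (1 : ℤ) • M.det :=
    Matrix.det_updateRow_sum M i (fun _ => 1)
  simp only [one_smul] at h1
  rw [hsum] at h1
  rw [← h1, Matrix.det_updateRow_smul]
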